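/- (Theorem 4, Completeness) Let E = {(T1,R1),…,(Tm,Rm)} be input-output examples with k-column tables, and suppose there exist column extraction programs π1',…,πk' and a predicate φ' that is a Boolean combination of atomic predicates drawn from a finite set Φ such that [[filter(π1' × ⋯ × πk', λt.φ')]]_T = R for every (T,R) ∈ E. Then: (a) for each i ∈ {1,…,k}, πi' is accepted by the intersection automaton A_i of the automata ConstructDFA(Tj,Rj,i) over j = 1,…,m; and (b) there exists a formula φ in disjunctive normal form over the atomic predicates of Φ, pointwise equal to φ' on all k-tuples of nodes, such that [[filter(π1' × ⋯ × πk', λt.φ)]]_T = R for every (T,R) ∈ E. -/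

import Mathlib

/-- A hierarchical data tree (HDT): a finite rooted tree in which every node
carries a tag, a position (it is the pos'th child with its tag under its
parent), and a data value. -/
structure HDT where
  /-- the (finite) type of nodes -/
  Node : Type
  fintypeNode : Fintype Node
  root : Node
  parent : Node → Option Node
  tag : Node → String
  pos : Node → Nat
  data : Node → String
  parent_root : parent root = none
  parent_isSome : ∀ n, n ≠ root → (parent n).isSome
  reaches_root : ∀ n, Relation.ReflTransGen (fun c p => parent c = some p) n root
  pos_unique : ∀ a b p, parent a = some p → parent b = some p →
    tag a = tag b → pos a = pos b → a = b

/-- `c` is a child of `p`. -/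
def HDT.IsChildOf (T : HDT) (c p : T.Node) : Prop := T.parent c = some p

/-- `d` is a strict descendant of `a`. -/
def HDT.IsDescOf (T : HDT) (d a : T.Node) : Prop := Relation.TransGen T.IsChildOf d a

/-- a leaf is a node with no children. -/
def HDT.IsLeaf (T : HDT) (n : T.Node) : Prop := ∀ c, ¬ T.IsChildOf c n

/-- Column extraction programs:
`π ::= s | children(π,tag) | pchildren(π,tag,pos) | descendants(π,tag)`. -/
inductive ColProg where
  | id : ColProg
  | children : ColProg → String → ColProg
  | pchildren : ColProg → String → Nat → ColProg
  | descendants : ColProg → String → ColProg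

/-- Semantics `[[π]]_{s,T}` of column extraction programs. -/
def evalCol (T : HDT) : ColProg → Set T.Node → Set T.Node
  | .id, s => s
  | .children π tg, s => {c | ∃ p ∈ evalCol T π s, T.IsChildOf c p ∧ T.tag c = tg}
  | .pchildren π tg i, s =>
      {c | ∃ p ∈ evalCol T π s, T.IsChildOf c p ∧ T.tag c = tg ∧ T.pos c = i}
  | .descendants π tg, s => {d | ∃ a ∈ evalCol T π s, T.IsDescOf d a ∧ T.tag d = tg}

/-- A table with `k` columns: a finite set of `k`-tuples of data values. -/
abbrev Table (k : ℕ) := Finset (Fin k → String)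

/-- `column(R,i)`: the set of values occurring in the i'th component of rows of `R`. -/
def tableColumn {k : ℕ} (R : Table k) (i : Fin k) : Set String := {v | ∃ r ∈ R, r i = v}

/-- `π` overapproximates `column(R,i)` on `T`: every value of the column is the data
of some node extracted by `π` from `{root(T)}`. -/
def Overapprox (T : HDT) {k : ℕ} (R : Table k) (i : Fin k) (π : ColProg) : Prop :=
  ∀ v ∈ tableColumn R i, ∃ n ∈ evalCol T π {T.root}, T.data n = v
/-- The alphabet Σ of the constructed DFA: one symbol per column-extraction
operator (instantiated with a tag and, for `pchildren`, a position). -/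
inductive ColSym where
  | children (tag : String)
  | pchildren (tag : String) (pos : Nat)
  | descendants (tag : String)

/-- The result of applying the operator named by a symbol to a set of nodes of `T`. -/
def applySym (T : HDT) (s : Set T.Node) : ColSym → Set T.Node
  | .children tg => {c | ∃ p ∈ s, T.IsChildOf c p ∧ T.tag c = tg}
  | .pchildren tg i => {c | ∃ p ∈ s, T.IsChildOf c p ∧ T.tag c = tg ∧ T.pos c = i}
  | .descendants tg => {d | ∃ a ∈ s, T.IsDescOf d a ∧ T.tag d = tg}

/-- Applying the operators of a word in order, starting from `{root(T)}`. -/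
def runWord (T : HDT) (w : List ColSym) : Set T.Node := w.foldl (applySym T) {T.root}

/-- The sets of nodes reachable from `{root(T)}` by repeatedly applying operators;
these are exactly the states of the constructed DFA. -/
def ReachableSet (T : HDT) (s : Set T.Node) : Prop := ∃ w : List ColSym, runWord T w = s

/-- The column extraction program `π_w` corresponding to a word `w`. -/
def progOfWord (w : List ColSym) : ColProg :=
  w.foldl (fun π f =>
    match f with
    | .children tg => .children π tg
    | .pchildren tg i => .pchildren π tg i
    | .descendants tg => .descendants π tg) .id

/-- The word of operator symbols corresponding to a column extraction program. -/
def wordOfProg : ColProg → List ColSym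
  | .id => []
  | .children π tg => wordOfProg π ++ [.children tg]
  | .pchildren π tg i => wordOfProg π ++ [.pchildren tg i]
  | .descendants π tg => wordOfProg π ++ [.descendants tg]

/-- A state `q_s` is accepting iff every value of `column(R,i)` equals the data
of some node in `s`. -/
def AcceptSet (T : HDT) {k : ℕ} (R : Table k) (i : Fin k) (s : Set T.Node) : Prop :=
  ∀ v ∈ tableColumn R i, ∃ n ∈ s, T.data n = v

/-- `ConstructDFA(T,R,i)`: states are the reachable sets of nodes of `T`, the start
state is `q_{{root(T)}}`, the transition on symbol `f` applies the corresponding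
operator, and `q_s` is accepting iff `s` overapproximates `column(R,i)`. -/
def constructDFA (T : HDT) {k : ℕ} (R : Table k) (i : Fin k) :
    DFA ColSym {s : Set T.Node // ReachableSet T s} where
  step := fun q f =>
    ⟨applySym T q.1 f, by
      obtain ⟨w, hw⟩ := q.2
      refine ⟨w ++ [f], ?_⟩
      simp only [runWord, List.foldl_append, List.foldl_cons, List.foldl_nil] at hw ⊢
      rw [hw]⟩
  start := ⟨{T.root}, ⟨[], rfl⟩⟩
  accept := {q | AcceptSet T R i q.1}

/-- The product (intersection) automaton of a family of DFAs over a common alphabet: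
states are tuples of component states, and a tuple is accepting iff every
component is accepting. -/
def productDFA {m : ℕ} {σ : Fin m → Type} (A : ∀ j, DFA ColSym (σ j)) :
    DFA ColSym (∀ j, σ j) where
  step := fun q f j => (A j).step (q j) f
  start := fun j => (A j).start
  accept := {q | ∀ j, q j ∈ (A j).accept}
/-- Node extractors: `φ ::= n | parent(φ) | child(φ, tag, pos)`. -/
inductive NodeExt where
  | id : NodeExt
  | parent : NodeExt → NodeExt
  | child : NodeExt → String → Nat → NodeExt
deriving DecidableEq

/-- The child of `p` with the given tag and position, if any (it is unique by
the position property of HDTs). -/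
noncomputable def childAt (T : HDT) (p : T.Node) (tg : String) (i : Nat) : Option T.Node := by
  classical
  exact if h : ∃ c, T.IsChildOf c p ∧ T.tag c = tg ∧ T.pos c = i then some h.choose else none

/-- Semantics of node extractors: `⊥` (here `none`) when the required parent or
child does not exist. -/
noncomputable def evalNodeExt (T : HDT) : NodeExt → T.Node → Option T.Node
  | .id, n => some n
  | .parent φ, n => (evalNodeExt T φ n).bind T.parent
  | .child φ tg i, n => (evalNodeExt T φ n).bind fun p => childAt T p tg i

/-- Comparison operators `⊴`. -/
inductive CmpOp where
  | eq | ne | lt | le | gt | ge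
deriving DecidableEq

/-- Evaluation of a comparison operator on data values. -/
def CmpOp.evalData : CmpOp → String → String → Prop
  | .eq, a, b => a = b
  | .ne, a, b => a ≠ b
  | .lt, a, b => a < b
  | .le, a, b => a ≤ b
  | .gt, a, b => b < a
  | .ge, a, b => b ≤ a

/-- Atomic predicates over `k`-tuples `t` of nodes:
`((λn.φ) t[i]) ⊴ c` and `((λn.φ₁) t[i]) ⊴ ((λn.φ₂) t[j])`. -/
inductive AtomPred (k : ℕ) where
  | cmpConst (φ : NodeExt) (i : Fin k) (op : CmpOp) (c : String)
  | cmpNodes (φ₁ : NodeExt) (i : Fin k) (op : CmpOp) (φ₂ : NodeExt) (j : Fin k)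
deriving DecidableEq

/-- Semantics of atomic predicates: a node-constant comparison compares the data of
the extracted node with the constant; a node-node comparison compares data when both
extracted nodes are leaves, tests node identity when `⊴` is `=` and neither is a
leaf, and is false otherwise (in particular when an extractor returns `⊥`). -/
noncomputable def evalAtom (T : HDT) {k : ℕ} : AtomPred k → (Fin k → T.Node) → Prop
  | .cmpConst φ i op c, t =>
      ∃ n, evalNodeExt T φ (t i) = some n ∧ op.evalData (T.data n) c
  | .cmpNodes φ₁ i op φ₂ j, t =>
      ∃ n₁ n₂, evalNodeExt T φ₁ (t i) = some n₁ ∧ evalNodeExt T φ₂ (t j) = some n₂ ∧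
        ((T.IsLeaf n₁ ∧ T.IsLeaf n₂ ∧ op.evalData (T.data n₁) (T.data n₂)) ∨
          (op = CmpOp.eq ∧ ¬ T.IsLeaf n₁ ∧ ¬ T.IsLeaf n₂ ∧ n₁ = n₂))

/-- Predicates: Boolean combinations (∧, ∨, ¬) of atomic predicates. -/
inductive TuplePred (k : ℕ) where
  | atom (a : AtomPred k)
  | and (p q : TuplePred k)
  | or (p q : TuplePred k)
  | not (p : TuplePred k)

/-- Semantics of predicates on a `k`-tuple of nodes of `T`. -/
noncomputable def evalPred (T : HDT) {k : ℕ} : TuplePred k → (Fin k → T.Node) → Prop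
  | .atom a, t => evalAtom T a t
  | .and p q, t => evalPred T p t ∧ evalPred T q t
  | .or p q, t => evalPred T p t ∨ evalPred T q t
  | .not p, t => ¬ evalPred T p t

/-- The set of atomic predicates occurring in a predicate. -/
def atomsOf {k : ℕ} : TuplePred k → Finset (AtomPred k)
  | .atom a => {a}
  | .and p q => atomsOf p ∪ atomsOf q
  | .or p q => atomsOf p ∪ atomsOf q
  | .not p => atomsOf p

/-- Semantics of the table extractor `ψ = π₁ × ⋯ × π_k`:
tuples whose j'th component is extracted by `π_j` from `{root(T)}`. -/
def tableSem (T : HDT) {k : ℕ} (Ψ : Fin k → ColProg) : Set (Fin k → T.Node) :=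
  {t | ∀ j, t j ∈ evalCol T (Ψ j) {T.root}}

/-- The data tuple of a tuple of nodes. -/
def dataTuple (T : HDT) {k : ℕ} (t : Fin k → T.Node) : Fin k → String :=
  fun j => T.data (t j)

/-- Semantics of `filter(ψ, λt.φ)` on `T`: the data tuples of the extracted
tuples satisfying `φ`. -/
noncomputable def filterSem (T : HDT) {k : ℕ} (Ψ : Fin k → ColProg) (φ : TuplePred k) :
    Set (Fin k → String) :=
  {r | ∃ t ∈ tableSem T Ψ, evalPred T φ t ∧ dataTuple T t = r}
/-- Literals: atomic predicates and their negations. -/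
inductive TuplePred.IsLit {k : ℕ} : TuplePred k → Prop
  | atom (a : AtomPred k) : TuplePred.IsLit (.atom a)
  | natom (a : AtomPred k) : TuplePred.IsLit (.not (.atom a))

/-- Finite conjunctions of literals. -/
inductive TuplePred.IsConj {k : ℕ} : TuplePred k → Prop
  | lit {p : TuplePred k} : TuplePred.IsLit p → TuplePred.IsConj p
  | and {p q : TuplePred k} :
      TuplePred.IsConj p → TuplePred.IsConj q → TuplePred.IsConj (.and p q)

/-- Disjunctive normal form: a finite disjunction of finite conjunctions of
atomic predicates and their negations. -/
inductive TuplePred.IsDNF {k : ℕ} : TuplePred k → Prop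
  | conj {p : TuplePred k} : TuplePred.IsConj p → TuplePred.IsDNF p
  | or {p q : TuplePred k} :
      TuplePred.IsDNF p → TuplePred.IsDNF q → TuplePred.IsDNF (.or p q)

/-! ### Auxiliary material for the proof -/

section AuxDFA

lemma foldl_wordOfProg (T : HDT) (π : ColProg) (s : Set T.Node) :
    List.foldl (applySym T) s (wordOfProg π) = evalCol T π s := by
  induction π generalizing s with
  | id => rfl
  | children π tg ih =>
      simp only [wordOfProg, List.foldl_append, List.foldl_cons, List.foldl_nil, ih]
      rfl
  | pchildren π tg i ih =>
      simp only [wordOfProg, List.foldl_append, List.foldl_cons, List.foldl_nil, ih]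
      rfl
  | descendants π tg ih =>
      simp only [wordOfProg, List.foldl_append, List.foldl_cons, List.foldl_nil, ih]
      rfl

lemma constructDFA_evalFrom (T : HDT) {k : ℕ} (R : Table k) (i : Fin k)
    (w : List ColSym) (q : {s : Set T.Node // ReachableSet T s}) :
    ((constructDFA T R i).evalFrom q w).1 = List.foldl (applySym T) q.1 w := by
  induction w generalizing q with
  | nil => rfl
  | cons f w ih =>
      show ((constructDFA T R i).evalFrom ((constructDFA T R i).step q f) w).1 = _
      rw [ih]
      rfl

lemma productDFA_evalFrom {m : ℕ} {σ : Fin m → Type} (A : ∀ j, DFA ColSym (σ j))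
    (w : List ColSym) (q : ∀ j, σ j) :
    (productDFA A).evalFrom q w = fun j => (A j).evalFrom (q j) w := by
  induction w generalizing q with
  | nil => rfl
  | cons f w ih =>
      show (productDFA A).evalFrom ((productDFA A).step q f) w = _
      rw [ih]
      rfl

end AuxDFA

section AuxDNF

variable {k : ℕ}

/-- Boolean evaluation of a predicate under an assignment to atoms. -/
def evalB (v : AtomPred k → Bool) : TuplePred k → Bool
  | .atom a => v a
  | .and p q => evalB v p && evalB v q
  | .or p q => evalB v p || evalB v q
  | .not p => ! evalB v p

lemma evalB_iff (T : HDT) (t : Fin k → T.Node) (v : AtomPred k → Bool) :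
    ∀ φ : TuplePred k, (∀ a ∈ atomsOf φ, (evalAtom T a t ↔ v a = true)) →
      (evalPred T φ t ↔ evalB v φ = true) := by
  intro φ
  induction φ with
  | atom a => intro h; simpa [evalPred, evalB] using h a (by simp [atomsOf])
  | and p q ihp ihq =>
      intro h
      simp only [evalPred, evalB, Bool.and_eq_true]
      rw [ihp (fun a ha => h a (by simp [atomsOf, ha])),
        ihq (fun a ha => h a (by simp [atomsOf, ha]))]
  | or p q ihp ihq =>
      intro h
      simp only [evalPred, evalB, Bool.or_eq_true]
      rw [ihp (fun a ha => h a (by simp [atomsOf, ha])),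
        ihq (fun a ha => h a (by simp [atomsOf, ha]))]
  | not p ihp =>
      intro h
      simp only [evalPred, evalB, Bool.not_eq_true']
      rw [ihp (fun a ha => h a (by simpa [atomsOf] using ha))]
      simp

lemma atomsOf_nonempty (φ : TuplePred k) : (atomsOf φ).Nonempty := by
  induction φ with
  | atom a => exact ⟨a, by simp [atomsOf]⟩
  | and p q ihp ihq => exact ihp.mono (by simp [atomsOf, Finset.subset_union_left])
  | or p q ihp ihq => exact ihp.mono (by simp [atomsOf, Finset.subset_union_left])
  | not p ihp => exact ihp

/-- The literal for atom `a` under assignment `v`. -/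
def litOf (v : AtomPred k → Bool) (a : AtomPred k) : TuplePred k :=
  if v a then .atom a else .not (.atom a)

/-- The conjunction of the literals for the atoms `a :: l` under `v`. -/
def conjOf (v : AtomPred k → Bool) : AtomPred k → List (AtomPred k) → TuplePred k
  | a, [] => litOf v a
  | a, b :: l => .and (litOf v a) (conjOf v b l)

/-- The disjunction of `p :: l`. -/
def disjOf : TuplePred k → List (TuplePred k) → TuplePred k
  | p, [] => p
  | p, q :: l => .or p (disjOf q l)

lemma litOf_isLit (v : AtomPred k → Bool) (a : AtomPred k) : (litOf v a).IsLit := by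
  unfold litOf; split
  · exact .atom a
  · exact .natom a

lemma conjOf_isConj (v : AtomPred k → Bool) :
    ∀ a l, (conjOf v a l).IsConj
  | a, [] => .lit (litOf_isLit v a)
  | a, b :: l => .and (.lit (litOf_isLit v a)) (conjOf_isConj v b l)

lemma disjOf_isDNF : ∀ (p : TuplePred k) (l : List (TuplePred k)),
    p.IsConj → (∀ q ∈ l, TuplePred.IsConj q) → (disjOf p l).IsDNF
  | p, [], hp, _ => .conj hp
  | p, q :: l, hp, hl =>
      .or (.conj hp) (disjOf_isDNF q l (hl q (by simp))
        (fun r hr => hl r (by simp [hr])))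

lemma atomsOf_litOf (v : AtomPred k → Bool) (a : AtomPred k) :
    atomsOf (litOf v a) = {a} := by
  unfold litOf; split <;> rfl

lemma atomsOf_conjOf (v : AtomPred k → Bool) :
    ∀ a l, atomsOf (conjOf v a l) ⊆ insert a l.toFinset
  | a, [] => by simp [conjOf, atomsOf_litOf]
  | a, b :: l => by
      simp only [conjOf, atomsOf, atomsOf_litOf]
      intro x hx
      rcases Finset.mem_union.1 hx with hx | hx
      · simp only [Finset.mem_singleton] at hx; simp [hx]
      · have h2 := atomsOf_conjOf v b l hx
        simp only [Finset.mem_insert, List.mem_toFinset, List.mem_cons] at h2 ⊢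
        tauto

lemma atomsOf_disjOf (Φ : Finset (AtomPred k)) :
    ∀ (p : TuplePred k) (l : List (TuplePred k)), atomsOf p ⊆ Φ →
      (∀ q ∈ l, atomsOf q ⊆ Φ) → atomsOf (disjOf p l) ⊆ Φ
  | p, [], hp, _ => hp
  | p, q :: l, hp, hl => by
      simp only [disjOf, atomsOf]
      exact Finset.union_subset hp
        (atomsOf_disjOf Φ q l (hl q (by simp)) (fun r hr => hl r (by simp [hr])))

lemma evalPred_litOf (T : HDT) (t : Fin k → T.Node) (v : AtomPred k → Bool)
    (a : AtomPred k) :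
    (evalPred T (litOf v a) t ↔ (evalAtom T a t ↔ v a = true)) := by
  unfold litOf; split <;> rename_i h <;> simp [evalPred, h]

lemma evalPred_conjOf (T : HDT) (t : Fin k → T.Node) (v : AtomPred k → Bool) :
    ∀ a l, (evalPred T (conjOf v a l) t ↔
      ∀ b ∈ a :: l, (evalAtom T b t ↔ v b = true))
  | a, [] => by simpa [conjOf] using evalPred_litOf T t v a
  | a, b :: l => by
      show (evalPred T (litOf v a) t ∧ evalPred T (conjOf v b l) t) ↔ _
      rw [evalPred_litOf, evalPred_conjOf T t v b l]
      constructor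
      · rintro ⟨h1, h2⟩ c hc
        rcases List.mem_cons.1 hc with rfl | hc
        · exact h1
        · exact h2 c hc
      · intro h
        exact ⟨h a (by simp), fun c hc => h c (by simp [List.mem_cons.1 hc])⟩

lemma evalPred_disjOf (T : HDT) (t : Fin k → T.Node) :
    ∀ (p : TuplePred k) (l : List (TuplePred k)),
      (evalPred T (disjOf p l) t ↔ evalPred T p t ∨ ∃ q ∈ l, evalPred T q t)
  | p, [] => by simp [disjOf]
  | p, q :: l => by
      show (evalPred T p t ∨ evalPred T (disjOf q l) t) ↔ _
      rw [evalPred_disjOf T t q l]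
      constructor
      · rintro (h | h | ⟨r, hr, h⟩)
        · exact Or.inl h
        · exact Or.inr ⟨q, by simp, h⟩
        · exact Or.inr ⟨r, by simp [hr], h⟩
      · rintro (h | ⟨r, hr, h⟩)
        · exact Or.inl h
        · rcases List.mem_cons.1 hr with rfl | hr
          · exact Or.inr (Or.inl h)
          · exact Or.inr (Or.inr ⟨r, hr, h⟩)

lemma filterSem_congr (T : HDT) (Ψ : Fin k → ColProg) (φ φ' : TuplePred k)
    (h : ∀ t : Fin k → T.Node, evalPred T φ t ↔ evalPred T φ' t) :
    filterSem T Ψ φ = filterSem T Ψ φ' := by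
  ext r
  simp only [filterSem, Set.mem_setOf_eq]
  constructor <;> rintro ⟨t, h1, h2, h3⟩
  · exact ⟨t, h1, (h t).1 h2, h3⟩
  · exact ⟨t, h1, (h t).2 h2, h3⟩

end AuxDNF

/-- Theorem 4, Completeness: Suppose the program
`filter(π₁' × ⋯ × π_k', λt.φ')`, where `φ'` is a Boolean combination of atomic
predicates drawn from the finite set `Φ`, satisfies all examples. Then (a) for each
column `i`, `π_i'` is accepted by the intersection (product) automaton of the
automata `ConstructDFA(Tj,Rj,i)`; and (b) there is a DNF formula `φ` over the
atomic predicates of `Φ`, pointwise equal to `φ'` on all k-tuples of nodes, such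
that `filter(π₁' × ⋯ × π_k', λt.φ)` also satisfies all examples. -/
theorem completeness
    {k m : ℕ} (E : Fin m → HDT × Table k) (Ψ' : Fin k → ColProg)
    (φ' : TuplePred k) (Φ : Finset (AtomPred k)) (hΦ : atomsOf φ' ⊆ Φ)
    (hfilter : ∀ j, filterSem (E j).1 Ψ' φ' = ((E j).2 : Set (Fin k → String))) :
    (∀ i, wordOfProg (Ψ' i) ∈
        (productDFA fun j => constructDFA (E j).1 (E j).2 i).accepts) ∧
      ∃ φ : TuplePred k, φ.IsDNF ∧ atomsOf φ ⊆ Φ ∧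
        (∀ (T : HDT) (t : Fin k → T.Node), evalPred T φ t ↔ evalPred T φ' t) ∧
        ∀ j, filterSem (E j).1 Ψ' φ = ((E j).2 : Set (Fin k → String)) := by
  classical
  constructor
  · -- Part (a)
    intro i
    rw [DFA.mem_accepts]
    intro j
    have hev : (productDFA fun j => constructDFA (E j).1 (E j).2 i).eval
          (wordOfProg (Ψ' i)) j
        = (constructDFA (E j).1 (E j).2 i).evalFrom
            (constructDFA (E j).1 (E j).2 i).start (wordOfProg (Ψ' i)) :=
      congrFun (productDFA_evalFrom (fun j => constructDFA (E j).1 (E j).2 i)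
        (wordOfProg (Ψ' i)) _) j
    rw [hev]
    show AcceptSet (E j).1 (E j).2 i _
    have h1 : ((constructDFA (E j).1 (E j).2 i).evalFrom
          (constructDFA (E j).1 (E j).2 i).start (wordOfProg (Ψ' i))).1
        = evalCol (E j).1 (Ψ' i) {(E j).1.root} := by
      rw [constructDFA_evalFrom]
      exact foldl_wordOfProg _ _ _
    rw [h1]
    intro v hv
    obtain ⟨r, hrR, hri⟩ := hv
    have hrf : r ∈ filterSem (E j).1 Ψ' φ' := by
      rw [hfilter j]; exact hrR
    obtain ⟨t, ht, _, hdt⟩ := hrf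
    refine ⟨t i, ht i, ?_⟩
    have : (E j).1.data (t i) = r i := by rw [← hdt]; rfl
    rw [this, hri]
  · -- Part (b)
    set atoms := atomsOf φ' with hatoms
    obtain ⟨a0, L', hL⟩ : ∃ a l, atoms.toList = a :: l := by
      rcases atomsOf_nonempty φ' with ⟨a, ha⟩
      cases h : atoms.toList with
      | nil =>
          have h0 : atoms = ∅ := by rwa [Finset.toList_eq_nil] at h
          exact absurd ha (by rw [← hatoms, h0]; simp)
      | cons a l => exact ⟨a, l, rfl⟩
    set conjS : Finset (AtomPred k) → TuplePred k :=
      fun S => conjOf (fun a => decide (a ∈ S)) a0 L' with hconjS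
    have hmemL : ∀ b, b ∈ a0 :: L' ↔ b ∈ atoms := by
      intro b; rw [← hL, Finset.mem_toList]
    have hconj_eval : ∀ (T : HDT) (t : Fin k → T.Node) (S : Finset (AtomPred k)),
        evalPred T (conjS S) t ↔ ∀ b ∈ atoms, (evalAtom T b t ↔ b ∈ S) := by
      intro T t S
      rw [hconjS]
      rw [evalPred_conjOf]
      constructor
      · intro h b hb
        have := h b ((hmemL b).2 hb)
        simpa using this
      · intro h b hb
        have := h b ((hmemL b).1 hb)
        simpa using this
    set good := atoms.powerset.toList.filter
      (fun S => evalB (fun a => decide (a ∈ S)) φ') with hgood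
    have good_spec : ∀ S, S ∈ good ↔
        S ⊆ atoms ∧ evalB (fun a => decide (a ∈ S)) φ' = true := by
      intro S
      rw [hgood, List.mem_filter, Finset.mem_toList, Finset.mem_powerset]
    have key : ∀ (T : HDT) (t : Fin k → T.Node),
        (∃ S ∈ good, evalPred T (conjS S) t) ↔ evalPred T φ' t := by
      intro T t
      constructor
      · rintro ⟨S, hS, hSt⟩
        obtain ⟨-, hB⟩ := (good_spec S).1 hS
        refine (evalB_iff T t _ φ' (fun a ha => ?_)).2 hB
        rw [(hconj_eval T t S).1 hSt a ha]
        simp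
      · intro h
        refine ⟨atoms.filter (fun b => evalAtom T b t), ?_, ?_⟩
        · rw [good_spec]
          refine ⟨Finset.filter_subset _ _, ?_⟩
          refine (evalB_iff T t _ φ' (fun a ha => ?_)).1 h
          simp [Finset.mem_filter, ha, hatoms]
        · rw [hconj_eval]
          intro b hb
          simp [Finset.mem_filter, hb]
    have main : ∃ φ : TuplePred k, φ.IsDNF ∧ atomsOf φ ⊆ Φ ∧
        ∀ (T : HDT) (t : Fin k → T.Node), evalPred T φ t ↔ evalPred T φ' t := by
      cases hgd : good with
      | nil =>
          refine ⟨.and (.atom a0) (.not (.atom a0)),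
            .conj (.and (.lit (.atom a0)) (.lit (.natom a0))), ?_, ?_⟩
          · have ha0 : a0 ∈ atoms := (hmemL a0).1 (by simp)
            simp only [atomsOf, Finset.union_self]
            exact Finset.singleton_subset_iff.2 (hΦ ha0)
          · intro T t
            constructor
            · rintro ⟨h1, h2⟩; exact absurd h1 h2
            · intro h
              obtain ⟨S, hS, -⟩ := (key T t).2 h
              rw [hgd] at hS; simp at hS
      | cons S0 rest =>
          have hsubC : ∀ S, atomsOf (conjS S) ⊆ Φ := by
            intro S
            refine (atomsOf_conjOf _ a0 L').trans ?_
            intro x hx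
            apply hΦ
            apply (hmemL x).1
            simpa using hx
          refine ⟨disjOf (conjS S0) (rest.map conjS), ?_, ?_, ?_⟩
          · refine disjOf_isDNF _ _ (conjOf_isConj _ _ _) ?_
            rintro q hq
            obtain ⟨S, -, rfl⟩ := List.mem_map.1 hq
            exact conjOf_isConj _ _ _
          · refine atomsOf_disjOf Φ _ _ (hsubC S0) ?_
            rintro q hq
            obtain ⟨S, -, rfl⟩ := List.mem_map.1 hq
            exact hsubC S
          · intro T t
            rw [evalPred_disjOf, ← key T t, hgd]
            constructor
            · rintro (h | ⟨q, hq, hqt⟩)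
              · exact ⟨S0, by simp, h⟩
              · obtain ⟨S, hS, rfl⟩ := List.mem_map.1 hq
                exact ⟨S, by simp [hS], hqt⟩
            · rintro ⟨S, hS, hSt⟩
              rcases List.mem_cons.1 hS with rfl | hS
              · exact Or.inl hSt
              · exact Or.inr ⟨conjS S, List.mem_map_of_mem hS, hSt⟩
    obtain ⟨φ, h1, h2, h3⟩ := main
    exact ⟨φ, h1, h2, h3, fun j => by
      rw [filterSem_congr _ _ _ φ' (h3 _)]; exact hfilter j⟩
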